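/- arXiv:1505.03097 — 2 statements merged into one kernel-verified Lean document; each statement's English description precedes it below -/
import Mathlib

section
/- Let u ≥ 1 be an integer and let a > 0, b ≥ 0 be real. Then Q_{u+1}(a, b) − Q_u(a, b) = (b/a)^u · e^{−(a²+b²)/2} · I_u(ab), where I_u is the modified Bessel function of the first kind of order u. -/
open MeasureTheory

/-- The generalized Marcum Q-function of integer order `u ≥ 1`. -/
noncomputable def marcumQ (u : ℕ) (a b : ℝ) : ℝ :=
  ∑' n : ℕ, Real.exp (-a ^ 2 / 2) * (a ^ 2 / 2) ^ n / n.factorial *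
    ((1 / Real.Gamma (n + u)) *
      ∫ t in Set.Ioi (b ^ 2 / 2), t ^ ((n : ℝ) + u - 1) * Real.exp (-t))

/-- The modified Bessel function of the first kind of order `u`:
`I_u(x) = Σ_{k=0}^∞ (x/2)^{2k+u} / (k! · Γ(k+u+1))`. -/
noncomputable def besselI (u : ℕ) (x : ℝ) : ℝ :=
  ∑' k : ℕ, (x / 2) ^ (2 * k + u) / (k.factorial * Real.Gamma (k + u + 1))

open Set Filter in
lemma gamma_integrableOn (s x : ℝ) (hs : 0 < s) (hx : 0 ≤ x) :
    IntegrableOn (fun t : ℝ => t ^ (s - 1) * Real.exp (-t)) (Set.Ioi x) := by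
  have := (Real.GammaIntegral_convergent hs).mono_set (Set.Ioi_subset_Ioi hx)
  simpa [mul_comm] using this

open Set Filter in
lemma ibp_gamma (s x : ℝ) (hs : 0 < s) (hx : 0 ≤ x) :
    (∫ t in Set.Ioi x, t ^ s * Real.exp (-t))
      - s * ∫ t in Set.Ioi x, t ^ (s - 1) * Real.exp (-t) = x ^ s * Real.exp (-x) := by
  have hint1 : IntegrableOn (fun t : ℝ => t ^ s * Real.exp (-t)) (Set.Ioi x) := by
    have := gamma_integrableOn (s + 1) x (by linarith) hx
    simpa using this
  have hint2 := gamma_integrableOn s x hs hx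
  set f : ℝ → ℝ := fun t => -(t ^ s * Real.exp (-t)) with hf
  have hderiv : ∀ t ∈ Ioi x, HasDerivAt f
      (t ^ s * Real.exp (-t) - s * (t ^ (s - 1) * Real.exp (-t))) t := by
    intro t ht
    have ht0 : t ≠ 0 := (lt_of_le_of_lt hx ht).ne'
    have h1 : HasDerivAt (fun t : ℝ => t ^ s) (s * t ^ (s - 1)) t :=
      Real.hasDerivAt_rpow_const (Or.inl ht0)
    have h2 : HasDerivAt (fun t : ℝ => Real.exp (-t)) (-Real.exp (-t)) t := by
      simpa [Function.comp_def] using (Real.hasDerivAt_exp (-t)).comp t (hasDerivAt_neg t)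
    have := (h1.mul h2).neg
    refine this.congr_deriv ?_
    ring
  have hcont : ContinuousWithinAt f (Ici x) x := by
    apply ContinuousAt.continuousWithinAt
    apply ContinuousAt.neg
    apply ContinuousAt.mul
    · exact Real.continuousAt_rpow_const x s (Or.inr hs.le)
    · exact (Real.continuous_exp.comp continuous_neg).continuousAt
  have htend : Tendsto f atTop (nhds 0) := by
    have := (tendsto_rpow_mul_exp_neg_mul_atTop_nhds_zero s 1 one_pos).neg
    simp only [neg_zero] at this
    refine this.congr fun t => ?_
    simp [f, one_mul]
  have key := integral_Ioi_of_hasDerivAt_of_tendsto hcont hderiv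
    (hint1.sub (hint2.const_mul s)) htend
  rw [integral_sub hint1 (hint2.const_mul s), integral_const_mul] at key
  have hfx : f x = -(x ^ s * Real.exp (-x)) := rfl
  rw [hfx] at key
  simpa using key

lemma marcum_summable (u : ℕ) (hu : 1 ≤ u) (a b : ℝ) :
    Summable (fun n : ℕ => Real.exp (-a ^ 2 / 2) * (a ^ 2 / 2) ^ n / n.factorial *
      ((1 / Real.Gamma (n + u)) *
        ∫ t in Set.Ioi (b ^ 2 / 2), t ^ ((n : ℝ) + u - 1) * Real.exp (-t))) := by
  have hx : (0:ℝ) ≤ b ^ 2 / 2 := by positivity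
  have hu1 : (1:ℝ) ≤ (u:ℝ) := by exact_mod_cast hu
  have hmaj : Summable (fun n : ℕ => Real.exp (-a ^ 2 / 2) * ((a ^ 2 / 2) ^ n / n.factorial)) :=
    (Real.summable_pow_div_factorial (a ^ 2 / 2)).mul_left _
  have hcomm : ∀ n : ℕ, (0:ℝ) < (n:ℝ) + u := fun n => by
    have : (0:ℝ) ≤ (n:ℝ) := Nat.cast_nonneg n
    linarith
  have hInn : ∀ n : ℕ, ∀ t ∈ Set.Ioi (0:ℝ), 0 ≤ t ^ ((n:ℝ) + u - 1) * Real.exp (-t) := by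
    intro n t ht
    exact mul_nonneg (Real.rpow_nonneg (le_of_lt ht) _) (Real.exp_pos _).le
  have hIpos : ∀ n : ℕ,
      0 ≤ ∫ t in Set.Ioi (b ^ 2 / 2), t ^ ((n : ℝ) + u - 1) * Real.exp (-t) := by
    intro n
    refine setIntegral_nonneg measurableSet_Ioi fun t ht => ?_
    exact hInn n t (lt_of_le_of_lt hx ht)
  apply Summable.of_nonneg_of_le _ _ hmaj
  · intro n
    have hs := hcomm n
    have hΓ : (0:ℝ) < Real.Gamma ((n:ℝ) + u) := Real.Gamma_pos_of_pos hs
    have hI := hIpos n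
    positivity
  · intro n
    have hs := hcomm n
    have hΓ : (0:ℝ) < Real.Gamma ((n:ℝ) + u) := Real.Gamma_pos_of_pos hs
    have hIle : (∫ t in Set.Ioi (b ^ 2 / 2), t ^ ((n : ℝ) + u - 1) * Real.exp (-t))
        ≤ ∫ t in Set.Ioi (0:ℝ), t ^ ((n : ℝ) + u - 1) * Real.exp (-t) := by
      refine setIntegral_mono_set (gamma_integrableOn _ 0 hs le_rfl) ?_ ?_
      · exact (ae_restrict_iff' measurableSet_Ioi).2 (Filter.Eventually.of_forall (hInn n))
      · exact Filter.Eventually.of_forall fun t ht => lt_of_le_of_lt hx ht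
    have hΓeq : Real.Gamma ((n:ℝ) + u)
        = ∫ t in Set.Ioi (0:ℝ), t ^ ((n : ℝ) + u - 1) * Real.exp (-t) := by
      rw [Real.Gamma_eq_integral hs]
      simp_rw [mul_comm]
    have h1 : (1 / Real.Gamma ((n:ℝ) + u)) *
        (∫ t in Set.Ioi (b ^ 2 / 2), t ^ ((n : ℝ) + u - 1) * Real.exp (-t)) ≤ 1 := by
      rw [div_mul_eq_mul_div, one_mul, div_le_one hΓ, hΓeq]
      exact hIle
    calc Real.exp (-a ^ 2 / 2) * (a ^ 2 / 2) ^ n / n.factorial *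
        ((1 / Real.Gamma (n + u)) *
          ∫ t in Set.Ioi (b ^ 2 / 2), t ^ ((n : ℝ) + u - 1) * Real.exp (-t))
        ≤ Real.exp (-a ^ 2 / 2) * (a ^ 2 / 2) ^ n / n.factorial * 1 := by
          apply mul_le_mul_of_nonneg_left h1
          positivity
      _ = Real.exp (-a ^ 2 / 2) * ((a ^ 2 / 2) ^ n / n.factorial) := by ring

/-- Recurrence for the Marcum Q-function:
`Q_{u+1}(a, b) − Q_u(a, b) = (b/a)^u e^{−(a²+b²)/2} I_u(ab)`. -/
theorem marcumQ_succ_sub (u : ℕ) (hu : 1 ≤ u) (a b : ℝ) (ha : 0 < a) (hb : 0 ≤ b) :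
    marcumQ (u + 1) a b - marcumQ u a b
      = (b / a) ^ u * Real.exp (-(a ^ 2 + b ^ 2) / 2) * besselI u (a * b) := by
  have ha' : a ≠ 0 := ha.ne'
  have hx : (0:ℝ) ≤ b ^ 2 / 2 := by positivity
  have hu1 : (1:ℝ) ≤ (u:ℝ) := by exact_mod_cast hu
  have h1 := marcum_summable (u + 1) (by omega) a b
  have h2 := marcum_summable u hu a b
  rw [marcumQ, marcumQ, ← Summable.tsum_sub h1 h2, besselI, ← tsum_mul_left]
  apply tsum_congr
  intro n
  have hn0 : (0:ℝ) ≤ (n:ℝ) := Nat.cast_nonneg n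
  have hs : (0:ℝ) < (n:ℝ) + u := by linarith
  have hΓ : Real.Gamma ((n:ℝ) + u) ≠ 0 := (Real.Gamma_pos_of_pos hs).ne'
  have hn : (n.factorial : ℝ) ≠ 0 := by exact_mod_cast n.factorial_ne_zero
  have e1 : ((n : ℝ) + ↑(u + 1) - 1) = (n:ℝ) + ↑u := by push_cast; ring
  have e2 : ((n : ℝ) + ↑(u + 1)) = (n:ℝ) + ↑u + 1 := by push_cast; ring
  rw [e1, e2, Real.Gamma_add_one hs.ne',
    sub_eq_iff_eq_add.mp (ibp_gamma ((n:ℝ) + u) (b ^ 2 / 2) hs hx)]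
  have e3 : (b ^ 2 / 2) ^ ((n:ℝ) + ↑u) = (b ^ 2 / 2) ^ (n + u) := by
    rw [show ((n:ℝ) + ↑u) = ((n + u : ℕ) : ℝ) by push_cast; ring, Real.rpow_natCast]
  have hexp : Real.exp (-(a ^ 2 + b ^ 2) / 2)
      = Real.exp (-a ^ 2 / 2) * Real.exp (-(b ^ 2 / 2)) := by
    rw [← Real.exp_add]
    congr 1
    ring
  rw [e3, hexp]
  field_simp
  rw [add_sub_cancel_right, div_pow, div_pow, div_pow, div_pow, mul_pow, ← pow_mul, ← pow_mul,
    pow_add, pow_add, pow_add, pow_mul]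
  field_simp
  ring
end

section
/- Let u ≥ 1 be an integer and let b, c, k > 0 be real. Then for every y > 0, the function y ↦ Q_u(b√(y/k), c) is differentiable at y with derivative (d/dy) Q_u(b√(y/k), c) = (b²/(2k)) · c^u · (b√(y/k))^{−u} · e^{−(b² y/k + c²)/2} · I_u(b c √(y/k)), where I_u is the modified Bessel function of the first kind of order u. -/
open MeasureTheory

open Set


lemma mq_integrable (m : ℕ) :
    IntegrableOn (fun t : ℝ => t ^ m * Real.exp (-t)) (Set.Ioi 0) := by
  have h := Real.GammaIntegral_convergent (s := (m : ℝ) + 1) (by positivity)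
  refine h.congr_fun (fun x hx => ?_) measurableSet_Ioi
  rw [mul_comm]
  congr 1
  rw [show ((m : ℝ) + 1 - 1) = ((m : ℕ) : ℝ) by ring]
  simp only [Real.rpow_natCast]

lemma mq_integrableOn (m : ℕ) {x : ℝ} (hx : 0 ≤ x) :
    IntegrableOn (fun t : ℝ => t ^ m * Real.exp (-t)) (Set.Ioi x) :=
  (mq_integrable m).mono_set (Set.Ioi_subset_Ioi hx)

lemma mq_integral_Ioi_zero (m : ℕ) :
    ∫ t in Set.Ioi (0:ℝ), t ^ m * Real.exp (-t) = m.factorial := by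
  rw [← Real.Gamma_nat_eq_factorial, Real.Gamma_eq_integral (by positivity)]
  refine setIntegral_congr_fun measurableSet_Ioi (fun x hx => ?_)
  rw [mul_comm]
  congr 1
  rw [show ((m : ℝ) + 1 - 1) = ((m : ℕ) : ℝ) by ring, Real.rpow_natCast]

lemma mq_nonneg (m : ℕ) {x : ℝ} (hx : 0 ≤ x) :
    0 ≤ ∫ t in Set.Ioi x, t ^ m * Real.exp (-t) := by
  refine setIntegral_nonneg measurableSet_Ioi (fun t ht => ?_)
  have ht' : (0:ℝ) < t := lt_of_le_of_lt hx ht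
  exact mul_nonneg (pow_nonneg ht'.le m) (Real.exp_pos _).le

lemma mq_le (m : ℕ) {x : ℝ} (hx : 0 < x) :
    ∫ t in Set.Ioi x, t ^ m * Real.exp (-t) ≤ m.factorial := by
  rw [← mq_integral_Ioi_zero m]
  refine setIntegral_mono_set (mq_integrable m) ?_ ?_
  · filter_upwards [self_mem_ae_restrict measurableSet_Ioi] with t ht
    have : (0:ℝ) < t := ht
    positivity
  · exact HasSubset.Subset.eventuallyLE (Set.Ioi_subset_Ioi hx.le)

lemma mq_ibp (m : ℕ) {x : ℝ} (hx : 0 < x) :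
    ∫ t in Set.Ioi x, t ^ (m+1) * Real.exp (-t)
      = (m+1) * (∫ t in Set.Ioi x, t ^ m * Real.exp (-t)) + x ^ (m+1) * Real.exp (-x) := by
  have hderiv : ∀ t ∈ Set.Ici x, HasDerivAt (fun t : ℝ => -(t ^ (m+1) * Real.exp (-t)))
      (t ^ (m+1) * Real.exp (-t) - ((m:ℝ)+1) * (t ^ m * Real.exp (-t))) t := by
    intro t _
    have h1 : HasDerivAt (fun t : ℝ => Real.exp (-t)) (Real.exp (-t) * (-1)) t :=
      ((hasDerivAt_id t).neg).exp
    have h2 := (hasDerivAt_pow (m+1) t).mul h1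
    have h3 : HasDerivAt (fun t : ℝ => -(t ^ (m+1) * Real.exp (-t))) _ t := h2.neg
    convert h3 using 1
    push_cast [Nat.add_sub_cancel]
    ring_nf
  have hint : IntegrableOn (fun t : ℝ => t ^ (m+1) * Real.exp (-t)
      - ((m:ℝ)+1) * (t ^ m * Real.exp (-t))) (Set.Ioi x) :=
    (mq_integrableOn (m+1) hx.le).sub ((mq_integrableOn m hx.le).const_mul _)
  have htend : Filter.Tendsto (fun t : ℝ => -(t ^ (m+1) * Real.exp (-t)))
      Filter.atTop (nhds 0) := by
    simpa using (Real.tendsto_pow_mul_exp_neg_atTop_nhds_zero (m+1)).neg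
  have H := integral_Ioi_of_hasDerivAt_of_tendsto' hderiv hint htend
  rw [integral_sub (mq_integrableOn (m+1) hx.le) ((mq_integrableOn m hx.le).const_mul _),
    integral_const_mul] at H
  have : (0:ℝ) - -(x ^ (m+1) * Real.exp (-x)) = x ^ (m+1) * Real.exp (-x) := by ring
  rw [this] at H
  set I1 := ∫ t in Set.Ioi x, t ^ (m+1) * Real.exp (-t) with hI1
  set I0 := ∫ t in Set.Ioi x, t ^ m * Real.exp (-t) with hI0
  push_cast
  linear_combination H

noncomputable def mqA (u : ℕ) (c : ℝ) (n : ℕ) : ℝ :=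
  (1 / Real.Gamma (n + u)) * ∫ t in Set.Ioi (c ^ 2 / 2), t ^ ((n : ℝ) + u - 1) * Real.exp (-t)

lemma mqA_eq {u : ℕ} (hu : 1 ≤ u) (c : ℝ) (hc : 0 < c) (n : ℕ) :
    mqA u c n = (∫ t in Set.Ioi (c ^ 2 / 2), t ^ (n + u - 1) * Real.exp (-t))
      / (n + u - 1).factorial := by
  unfold mqA
  have hle : 1 ≤ n + u := le_trans hu (Nat.le_add_left u n)
  have h1 : ((n : ℝ) + u) = ((n + u - 1 : ℕ) : ℝ) + 1 := by
    rw [Nat.cast_sub hle]; push_cast; ring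
  have h2 : ((n : ℝ) + u - 1) = ((n + u - 1 : ℕ) : ℝ) := by
    rw [Nat.cast_sub hle]; push_cast; ring
  rw [h1, Real.Gamma_nat_eq_factorial]
  rw [setIntegral_congr_fun measurableSet_Ioi
    (g := fun t : ℝ => t ^ (n + u - 1) * Real.exp (-t)) (fun t ht => by
      rw [show ((n + u - 1 : ℕ) : ℝ) + 1 - 1 = ((n + u - 1 : ℕ) : ℝ) from by ring,
        Real.rpow_natCast])]
  rw [one_div, inv_mul_eq_div]

lemma mqA_nonneg {u : ℕ} (hu : 1 ≤ u) {c : ℝ} (hc : 0 < c) (n : ℕ) :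
    0 ≤ mqA u c n := by
  rw [mqA_eq hu c hc]
  have h0 : (0:ℝ) ≤ c ^ 2 / 2 := by positivity
  exact div_nonneg (mq_nonneg _ h0) (Nat.cast_nonneg _)

lemma mqA_le_one {u : ℕ} (hu : 1 ≤ u) {c : ℝ} (hc : 0 < c) (n : ℕ) :
    mqA u c n ≤ 1 := by
  rw [mqA_eq hu c hc]
  have h0 : (0:ℝ) < c ^ 2 / 2 := by positivity
  rw [div_le_one (by exact_mod_cast Nat.factorial_pos _)]
  exact mq_le _ h0

lemma mqA_succ {u : ℕ} (hu : 1 ≤ u) {c : ℝ} (hc : 0 < c) (n : ℕ) :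
    mqA u c (n + 1) = mqA u c n
      + Real.exp (-(c ^ 2 / 2)) * (c ^ 2 / 2) ^ (n + u) / (n + u).factorial := by
  have hx0 : (0:ℝ) < c ^ 2 / 2 := by positivity
  obtain ⟨m, hm⟩ : ∃ m, n + u = m + 1 := ⟨n + u - 1, by omega⟩
  rw [mqA_eq hu c hc, mqA_eq hu c hc,
    show n + 1 + u - 1 = m + 1 from by omega, show n + u - 1 = m from by omega, hm,
    mq_ibp m hx0, Nat.factorial_succ]
  have hf : ((m.factorial : ℝ)) ≠ 0 := by exact_mod_cast m.factorial_ne_zero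
  have hm1 : ((m : ℝ) + 1) ≠ 0 := by positivity
  push_cast
  field_simp

noncomputable def mqG (u : ℕ) (c K : ℝ) (n : ℕ) (x : ℝ) : ℝ :=
  Real.exp (-(K * x)) * (K * x) ^ n / n.factorial * mqA u c n

noncomputable def mqG' (u : ℕ) (c K : ℝ) (n : ℕ) (x : ℝ) : ℝ :=
  (Real.exp (-(K * x)) * -K * (K * x) ^ n
    + Real.exp (-(K * x)) * ((n : ℝ) * (K * x) ^ (n - 1) * K)) / n.factorial * mqA u c n

lemma mqG_deriv (u : ℕ) (c K : ℝ) (n : ℕ) (x : ℝ) :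
    HasDerivAt (mqG u c K n) (mqG' u c K n x) x := by
  have hq : HasDerivAt (fun x : ℝ => K * x) K x := by
    simpa using (hasDerivAt_id x).const_mul K
  have h1 : HasDerivAt (fun x : ℝ => Real.exp (-(K * x))) (Real.exp (-(K * x)) * -K) x :=
    hq.neg.exp
  have h2 : HasDerivAt (fun x : ℝ => (K * x) ^ n) ((n : ℝ) * (K * x) ^ (n - 1) * K) x :=
    (hasDerivAt_pow n (K * x)).comp x hq
  exact ((h1.mul h2).div_const _).mul_const _

lemma sum_n_pow_fact (r : ℝ) :
    Summable (fun n : ℕ => (n : ℝ) * r ^ (n - 1) / n.factorial) := by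
  rw [← summable_nat_add_iff 1]
  refine (Real.summable_pow_div_factorial r).congr fun n => ?_
  rw [show n + 1 - 1 = n from rfl, Nat.factorial_succ]
  have h1 : ((n : ℝ) + 1) ≠ 0 := by positivity
  have h2 : ((n.factorial : ℝ)) ≠ 0 := by exact_mod_cast n.factorial_ne_zero
  push_cast
  field_simp

lemma sum_mqA_mul {u : ℕ} (hu : 1 ≤ u) {c : ℝ} (hc : 0 < c) (A : ℕ → ℕ) (q : ℝ)
    (hq : 0 ≤ q) : Summable (fun n : ℕ => mqA u c (A n) * (q ^ n / n.factorial)) := by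
  refine Summable.of_nonneg_of_le (fun n => ?_) (fun n => ?_)
    (Real.summable_pow_div_factorial q)
  · have h1 := mqA_nonneg hu hc (A n)
    positivity
  · have h2 := mqA_le_one hu hc (A n)
    have h3 : (0:ℝ) ≤ q ^ n / n.factorial := by positivity
    calc mqA u c (A n) * (q ^ n / n.factorial) ≤ 1 * (q ^ n / n.factorial) := by
          exact mul_le_mul_of_nonneg_right h2 h3
      _ = q ^ n / n.factorial := one_mul _

lemma sum_mqA_mul' {u : ℕ} (hu : 1 ≤ u) {c : ℝ} (hc : 0 < c) (q : ℝ) (hq : 0 ≤ q) :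
    Summable (fun n : ℕ => mqA u c n * ((n : ℝ) * q ^ (n - 1) / n.factorial)) := by
  refine Summable.of_nonneg_of_le (fun n => ?_) (fun n => ?_) (sum_n_pow_fact q)
  · have h1 := mqA_nonneg hu hc n
    positivity
  · have h2 := mqA_le_one hu hc n
    have h3 : (0:ℝ) ≤ (n : ℝ) * q ^ (n - 1) / n.factorial := by positivity
    calc mqA u c n * ((n : ℝ) * q ^ (n - 1) / n.factorial)
        ≤ 1 * ((n : ℝ) * q ^ (n - 1) / n.factorial) := mul_le_mul_of_nonneg_right h2 h3
      _ = _ := one_mul _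

lemma tsum_mqG' {u : ℕ} (hu : 1 ≤ u) {c : ℝ} (hc : 0 < c) {K : ℝ} (hK : 0 < K)
    {x : ℝ} (hx : 0 < x) :
    ∑' n : ℕ, mqG' u c K n x
      = K * Real.exp (-(K * x)) * ∑' n : ℕ,
        Real.exp (-(c ^ 2 / 2)) * (c ^ 2 / 2) ^ (n + u) / (n + u).factorial
          * ((K * x) ^ n / n.factorial) := by
  set q := K * x with hqdef
  have hq : 0 < q := by positivity
  set E := Real.exp (-q) with hEdef
  have S0 : Summable (fun n : ℕ => mqA u c n * (q ^ n / n.factorial)) :=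
    sum_mqA_mul hu hc id q hq.le
  have S1 : Summable (fun n : ℕ => mqA u c n * ((n : ℝ) * q ^ (n - 1) / n.factorial)) :=
    sum_mqA_mul' hu hc q hq.le
  have S2 : Summable (fun n : ℕ => mqA u c (n + 1) * (q ^ n / n.factorial)) :=
    sum_mqA_mul hu hc (· + 1) q hq.le
  have hterm : ∀ n : ℕ, mqG' u c K n x
      = K * E * (mqA u c n * ((n : ℝ) * q ^ (n - 1) / n.factorial))
        - K * E * (mqA u c n * (q ^ n / n.factorial)) := by
    intro n
    unfold mqG'
    rw [← hqdef, ← hEdef]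
    ring
  rw [tsum_congr hterm, Summable.tsum_sub (S1.mul_left _) (S0.mul_left _), tsum_mul_left, tsum_mul_left]
  have hshift : ∑' n : ℕ, mqA u c n * ((n : ℝ) * q ^ (n - 1) / n.factorial)
      = ∑' n : ℕ, mqA u c (n + 1) * (q ^ n / n.factorial) := by
    rw [Summable.tsum_eq_zero_add S1]
    have h0 : mqA u c 0 * ((0 : ℝ) * q ^ (0 - 1) / (0:ℕ).factorial) = 0 := by
      norm_num
    norm_num [h0]
    refine tsum_congr fun n => ?_
    rw [Nat.factorial_succ]
    have h1 : ((n : ℝ) + 1) ≠ 0 := by positivity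
    have h2 : ((n.factorial : ℝ)) ≠ 0 := by exact_mod_cast n.factorial_ne_zero
    push_cast
    field_simp
  rw [hshift]
  rw [show K * E * (∑' n : ℕ, mqA u c (n + 1) * (q ^ n / n.factorial))
      - K * E * (∑' n : ℕ, mqA u c n * (q ^ n / n.factorial))
    = K * E * ((∑' n : ℕ, mqA u c (n + 1) * (q ^ n / n.factorial))
      - ∑' n : ℕ, mqA u c n * (q ^ n / n.factorial)) from by ring]
  rw [← Summable.tsum_sub S2 S0]
  congr 1
  refine tsum_congr fun n => ?_
  rw [mqA_succ hu hc n]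
  ring

lemma mqG'_bound {u : ℕ} (hu : 1 ≤ u) {c : ℝ} (hc : 0 < c) {K : ℝ} (hK : 0 < K)
    {M : ℝ} (hM : 0 < M) (n : ℕ) {x : ℝ} (hx : x ∈ Set.Ioo (0:ℝ) M) :
    ‖mqG' u c K n x‖ ≤ K * ((K * M) ^ n / n.factorial)
      + K * ((n : ℝ) * (K * M) ^ (n - 1) / n.factorial) := by
  obtain ⟨hx0, hxM⟩ := hx
  have hq0 : 0 < K * x := by positivity
  have hqM : K * x ≤ K * M := mul_le_mul_of_nonneg_left hxM.le hK.le
  have hE1 : Real.exp (-(K * x)) ≤ 1 := by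
    rw [← Real.exp_zero]
    exact Real.exp_le_exp.mpr (by linarith)
  have hA0 := mqA_nonneg hu hc n
  have hA1 := mqA_le_one hu hc n
  rw [mqG', Real.norm_eq_abs]
  calc |(Real.exp (-(K * x)) * -K * (K * x) ^ n
        + Real.exp (-(K * x)) * ((n : ℝ) * (K * x) ^ (n - 1) * K)) / n.factorial * mqA u c n|
      = |Real.exp (-(K * x)) * -K * (K * x) ^ n
        + Real.exp (-(K * x)) * ((n : ℝ) * (K * x) ^ (n - 1) * K)| / n.factorial
        * |mqA u c n| := by
        rw [abs_mul, abs_div, Nat.abs_cast]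
    _ ≤ (|Real.exp (-(K * x)) * -K * (K * x) ^ n|
        + |Real.exp (-(K * x)) * ((n : ℝ) * (K * x) ^ (n - 1) * K)|) / n.factorial * 1 := by
        have h1 : |mqA u c n| ≤ 1 := by rw [abs_of_nonneg hA0]; exact hA1
        have h2 := abs_add_le (Real.exp (-(K * x)) * -K * (K * x) ^ n)
          (Real.exp (-(K * x)) * ((n : ℝ) * (K * x) ^ (n - 1) * K))
        have h3 : (0:ℝ) < n.factorial := by exact_mod_cast n.factorial_pos
        have h4 : (0:ℝ) ≤ |Real.exp (-(K * x)) * -K * (K * x) ^ n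
          + Real.exp (-(K * x)) * ((n : ℝ) * (K * x) ^ (n - 1) * K)| / n.factorial := by
          positivity
        exact mul_le_mul (by gcongr) h1 (abs_nonneg _) (by positivity)
    _ = (Real.exp (-(K * x)) * K * (K * x) ^ n
        + Real.exp (-(K * x)) * ((n : ℝ) * (K * x) ^ (n - 1) * K)) / n.factorial := by
        rw [abs_mul, abs_mul, abs_neg, abs_of_nonneg (Real.exp_pos _).le,
          abs_of_nonneg hK.le, abs_of_nonneg (pow_nonneg hq0.le n),
          abs_of_nonneg (by positivity : (0:ℝ) ≤ Real.exp (-(K * x))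
            * ((n : ℝ) * (K * x) ^ (n - 1) * K)), mul_one]
    _ ≤ (1 * K * (K * M) ^ n + 1 * ((n : ℝ) * (K * M) ^ (n - 1) * K)) / n.factorial := by
        gcongr
    _ = K * ((K * M) ^ n / n.factorial) + K * ((n : ℝ) * (K * M) ^ (n - 1) / n.factorial) := by
        ring

/-- Derivative of `y ↦ Q_u(b√(y/k), c)` for `y > 0`:
`(d/dy) Q_u(b√(y/k), c) = (b²/(2k)) c^u (b√(y/k))^{−u} e^{−(b²y/k + c²)/2} I_u(bc√(y/k))`. -/
theorem hasDerivAt_marcumQ_sqrt (u : ℕ) (hu : 1 ≤ u) (b c k : ℝ)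
    (hb : 0 < b) (hc : 0 < c) (hk : 0 < k) (y : ℝ) (hy : 0 < y) :
    HasDerivAt (fun y => marcumQ u (b * Real.sqrt (y / k)) c)
      (b ^ 2 / (2 * k) * c ^ u * (b * Real.sqrt (y / k)) ^ (-(u : ℝ)) *
        Real.exp (-(b ^ 2 * y / k + c ^ 2) / 2) * besselI u (b * c * Real.sqrt (y / k))) y := by
  have hK : 0 < b ^ 2 / (2 * k) := by positivity
  set K := b ^ 2 / (2 * k) with hKdef
  have hymem : y ∈ Set.Ioo (0:ℝ) (y + 1) := ⟨hy, by linarith⟩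
  have hw : Summable (fun n : ℕ => K * ((K * (y + 1)) ^ n / n.factorial)
      + K * ((n : ℝ) * (K * (y + 1)) ^ (n - 1) / n.factorial)) :=
    ((Real.summable_pow_div_factorial _).mul_left K).add ((sum_n_pow_fact _).mul_left K)
  have hg0 : Summable (fun n => mqG u c K n y) := by
    have h := (sum_mqA_mul hu hc id (K * y) (by positivity)).congr
      (fun n => rfl :
        ∀ n, mqA u c (id n) * ((K * y) ^ n / n.factorial)
          = mqA u c n * ((K * y) ^ n / n.factorial))
    refine Summable.of_nonneg_of_le (fun n => ?_) (fun n => ?_) h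
    · have := mqA_nonneg hu hc n
      have he := (Real.exp_pos (-(K * y))).le
      rw [mqG]
      positivity
    · have hE1 : Real.exp (-(K * y)) ≤ 1 := by
        rw [← Real.exp_zero]
        exact Real.exp_le_exp.mpr (by nlinarith)
      rw [mqG]
      calc Real.exp (-(K * y)) * (K * y) ^ n / n.factorial * mqA u c n
          ≤ 1 * (K * y) ^ n / n.factorial * mqA u c n := by
            have h3 : (0:ℝ) ≤ (K * y) ^ n / n.factorial := by positivity
            exact mul_le_mul_of_nonneg_right (by gcongr) (mqA_nonneg hu hc n)
        _ = mqA u c n * ((K * y) ^ n / n.factorial) := by ring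
  have H := hasDerivAt_tsum_of_isPreconnected hw isOpen_Ioo
    (convex_Ioo (0:ℝ) (y + 1)).isPreconnected
    (fun n x _ => mqG_deriv u c K n x)
    (fun n x hx => mqG'_bound hu hc hK (by linarith : (0:ℝ) < y + 1) n hx)
    hymem hg0 hymem
  have heq : (fun y => marcumQ u (b * Real.sqrt (y / k)) c)
      =ᶠ[nhds y] (fun z => ∑' n, mqG u c K n z) := by
    filter_upwards [Ioi_mem_nhds hy] with x hx
    have hx0 : (0:ℝ) < x := hx
    unfold marcumQ mqG
    refine tsum_congr fun n => ?_
    have ha2 : (b * Real.sqrt (x / k)) ^ 2 = 2 * (K * x) := by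
      rw [mul_pow, Real.sq_sqrt (by positivity), hKdef]
      field_simp
    rw [ha2, show -(2 * (K * x)) / 2 = -(K * x) from by ring,
      show 2 * (K * x) / 2 = K * x from by ring]
    rfl
  have H2 := H.congr_of_eventuallyEq heq
  suffices hval : K * c ^ u * (b * Real.sqrt (y / k)) ^ (-(u : ℝ)) *
      Real.exp (-(b ^ 2 * y / k + c ^ 2) / 2) * besselI u (b * c * Real.sqrt (y / k))
      = ∑' n, mqG' u c K n y by
    rw [hval]
    exact H2
  rw [tsum_mqG' hu hc hK hy]
  set s := Real.sqrt (y / k) with hs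
  have hs0 : 0 < s := Real.sqrt_pos.mpr (by positivity)
  have hs2 : s ^ 2 = y / k := Real.sq_sqrt (by positivity)
  clear_value s
  unfold besselI
  rw [← tsum_mul_left, ← tsum_mul_left]
  refine tsum_congr fun n => ?_
  rw [show ((n : ℝ) + u + 1) = ((n + u : ℕ) : ℝ) + 1 from by push_cast; ring,
    Real.Gamma_nat_eq_factorial,
    Real.rpow_neg (by positivity : (0:ℝ) ≤ b * s), Real.rpow_natCast,
    show -(b ^ 2 * y / k + c ^ 2) / 2 = -(K * y) + -(c ^ 2 / 2) from by
      rw [hKdef]; field_simp; ring,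
    Real.exp_add, pow_add, pow_mul,
    show (b * c * s / 2) ^ 2 = K * y * (c ^ 2 / 2) from by
      rw [show (b * c * s / 2) ^ 2 = b ^ 2 * c ^ 2 * s ^ 2 / 4 from by ring, hs2, hKdef]
      field_simp
      ring]
  have hkey : c ^ u * ((b * s) ^ u)⁻¹ * (b * c * s / 2) ^ u = (c ^ 2 / 2) ^ u := by
    rw [← inv_pow, ← mul_pow, ← mul_pow]
    congr 1
    field_simp
  have hf1 : ((n.factorial : ℝ)) ≠ 0 := by exact_mod_cast n.factorial_ne_zero
  have hf2 : (((n + u).factorial : ℝ)) ≠ 0 := by exact_mod_cast (n + u).factorial_ne_zero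
  clear_value K
  linear_combination (K * Real.exp (-(K * y)) * Real.exp (-(c ^ 2 / 2))
    * ((K * y) ^ n * (c ^ 2 / 2) ^ n) / (n.factorial * (n + u).factorial)) * hkey
end
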